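/- No linear map A : ℂⁿ → ℂⁿ (n a positive integer) is a J-class operator. -/
import Mathlib


open Filter Topology Matrix

/-- The J-set of a vector `x` under a bounded operator `T`. -/
def JSet {X : Type*} [NormedAddCommGroup X] [NormedSpace ℂ X]
    (T : X →L[ℂ] X) (x : X) : Set X :=
  {y | ∃ k : ℕ → ℕ, StrictMono k ∧ (∀ n, 0 < k n) ∧ ∃ u : ℕ → X,
    Tendsto u atTop (𝓝 x) ∧ Tendsto (fun n => (T ^ k n) (u n)) atTop (𝓝 y)}

/-- `T` is a J-class operator if `J(x) = X` for some nonzero `x`. -/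
def IsJClass {X : Type*} [NormedAddCommGroup X] [NormedSpace ℂ X]
    (T : X →L[ℂ] X) : Prop :=
  ∃ x : X, x ≠ 0 ∧ JSet T x = Set.univ

/-- Joint continuity of the dot product, in sequence form. -/
lemma tendsto_dotProduct_aux {n : ℕ} {a b : ℕ → (Fin n → ℂ)} {a₀ b₀ : Fin n → ℂ}
    (ha : Tendsto a atTop (𝓝 a₀)) (hb : Tendsto b atTop (𝓝 b₀)) :
    Tendsto (fun i => dotProduct (a i) (b i)) atTop (𝓝 (dotProduct a₀ b₀)) := by
  simp only [dotProduct]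
  apply tendsto_finset_sum
  intro i _
  exact (((continuous_apply i).tendsto a₀).comp ha).mul (((continuous_apply i).tendsto b₀).comp hb)

/-- Scalar decay: binomial coefficients times a small geometric factor tend to zero. -/
lemma choose_mul_pow_tendsto_zero {ν : ℂ} (hν0 : ν ≠ 0) (hν : ‖ν‖ < 1) (j : ℕ) :
    Tendsto (fun k : ℕ => ((k.choose j : ℂ) * ν ^ (k - j))) atTop (𝓝 0) := by
  have hr : |‖ν‖| < 1 := by rwa [abs_of_nonneg (norm_nonneg ν)]
  have hb : Tendsto (fun k : ℕ => ((k : ℝ) ^ j * ‖ν‖ ^ k) / ‖ν‖ ^ j) atTop (𝓝 0) := by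
    have := (tendsto_pow_const_mul_const_pow_of_abs_lt_one j hr).div_const (‖ν‖ ^ j)
    simpa only [zero_div] using this
  apply squeeze_zero_norm' _ hb
  filter_upwards [eventually_ge_atTop j] with k hk
  have hνn : ‖ν‖ ≠ 0 := norm_ne_zero_iff.mpr hν0
  have h1 : ‖(k.choose j : ℂ) * ν ^ (k - j)‖ = (k.choose j : ℝ) * ‖ν‖ ^ (k - j) := by
    rw [norm_mul, norm_pow]
    norm_num
  have hc : ((k.choose j : ℝ)) ≤ (k : ℝ) ^ j := by
    exact_mod_cast Nat.choose_le_pow k j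
  rw [h1, pow_sub₀ _ hνn hk, mul_div_assoc]
  exact mul_le_mul_of_nonneg_right hc (by positivity)

/-- No linear operator on `ℂⁿ` is a J-class operator. -/
theorem not_isJClass_finiteDimensional (n : ℕ) (hn : 0 < n)
    (A : (Fin n → ℂ) →L[ℂ] (Fin n → ℂ)) :
    ¬ IsJClass A := by
  rintro ⟨x, hx, hJ⟩
  -- every vector is in the J-set of x
  have hJ' : ∀ y : Fin n → ℂ, ∃ k : ℕ → ℕ, StrictMono k ∧ ∃ u : ℕ → (Fin n → ℂ),
      Tendsto u atTop (𝓝 x) ∧ Tendsto (fun i => (A ^ k i) (u i)) atTop (𝓝 y) := by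
    intro y
    have hy : y ∈ JSet A x := by rw [hJ]; trivial
    obtain ⟨k, hk, -, u, hu, hAu⟩ := hy
    exact ⟨k, hk, u, hu, hAu⟩
  -- the transpose endomorphism
  set M : Matrix (Fin n) (Fin n) ℂ :=
    LinearMap.toMatrix' (A : (Fin n → ℂ) →ₗ[ℂ] (Fin n → ℂ)) with hM
  set B : Module.End ℂ (Fin n → ℂ) := Matrix.toLin' Mᵀ with hB
  have hAapp : ∀ u : Fin n → ℂ, A u = M *ᵥ u := by
    intro u
    rw [← Matrix.toLin'_apply, hM, Matrix.toLin'_toMatrix']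
    rfl
  have pairing1 : ∀ (w u : Fin n → ℂ),
      dotProduct w (A u) = dotProduct (B w) u := by
    intro w u
    rw [hAapp, Matrix.dotProduct_mulVec, hB, Matrix.toLin'_apply, Matrix.mulVec_transpose]
  have pairing : ∀ (k : ℕ) (w u : Fin n → ℂ),
      dotProduct w ((A ^ k) u) = dotProduct ((B ^ k) w) u := by
    intro k
    induction k with
    | zero => intro w u; simp
    | succ k ih =>
        intro w u
        have h1 : (A ^ (k + 1)) u = (A ^ k) (A u) := by rw [pow_succ]; rfl
        have h2 : (B ^ (k + 1)) w = B ((B ^ k) w) := by rw [pow_succ']; rfl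
        rw [h1, ih, pairing1, h2]
  -- Step A: every eigenvalue of B has modulus > 1
  have stepA : ∀ μ : ℂ, B.HasEigenvalue μ → 1 < ‖μ‖ := by
    intro μ hμ
    by_contra hle
    push_neg at hle
    obtain ⟨w, hw⟩ := hμ.exists_hasEigenvector
    have hw0 : w ≠ 0 := hw.right
    have key : ∀ y : Fin n → ℂ, ‖dotProduct w y‖ ≤ ‖dotProduct w x‖ := by
      intro y
      obtain ⟨k, hk, u, hu, hAu⟩ := hJ' y
      have h1 : Tendsto (fun i => ‖dotProduct w ((A ^ k i) (u i))‖) atTop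
          (𝓝 ‖dotProduct w y‖) :=
        (tendsto_dotProduct_aux tendsto_const_nhds hAu).norm
      have h2 : Tendsto (fun i => ‖dotProduct w (u i)‖) atTop
          (𝓝 ‖dotProduct w x‖) :=
        (tendsto_dotProduct_aux tendsto_const_nhds hu).norm
      refine le_of_tendsto_of_tendsto' h1 h2 fun i => ?_
      rw [pairing, hw.pow_apply, smul_dotProduct, smul_eq_mul, norm_mul, norm_pow]
      have hp : ‖μ‖ ^ k i ≤ 1 := pow_le_one₀ (norm_nonneg μ) hle
      calc ‖μ‖ ^ k i * ‖dotProduct w (u i)‖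
          ≤ 1 * ‖dotProduct w (u i)‖ :=
            mul_le_mul_of_nonneg_right hp (norm_nonneg _)
        _ = ‖dotProduct w (u i)‖ := one_mul _
    obtain ⟨i, hi⟩ : ∃ i, w i ≠ 0 := by
      by_contra h
      push_neg at h
      exact hw0 (funext h)
    have hkey := key ((((‖dotProduct w x‖ + 1 : ℝ) : ℂ) / (w i)) •
      (Pi.single i 1 : Fin n → ℂ))
    rw [dotProduct_smul, smul_eq_mul, dotProduct_single, mul_one,
      div_mul_cancel₀ _ hi] at hkey
    rw [Complex.norm_real, Real.norm_of_nonneg (by positivity)] at hkey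
    linarith
  -- B is invertible
  have hBinj : Function.Injective B := by
    rw [← LinearMap.ker_eq_bot]
    by_contra h
    have h0 : B.HasEigenvalue 0 := by
      rw [Module.End.hasEigenvalue_iff, Module.End.eigenspace_zero]
      exact h
    have := stepA 0 h0
    norm_num at this
  have hBbij : Function.Bijective B := ⟨hBinj, LinearMap.injective_iff_surjective.mp hBinj⟩
  set E := LinearEquiv.ofBijective B hBbij with hE
  set C : Module.End ℂ (Fin n → ℂ) := (E.symm : (Fin n → ℂ) →ₗ[ℂ] (Fin n → ℂ)) with hC
  have hBC : ∀ v, B (C v) = v := fun v => E.apply_symm_apply v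
  have hCB : ∀ v, C (B v) = v := fun v => E.symm_apply_apply v
  have hBCk : ∀ (k : ℕ) (w), (B ^ k) ((C ^ k) w) = w := by
    intro k
    induction k with
    | zero => intro w; simp
    | succ k ih =>
        intro w
        have h1 : (C ^ (k + 1)) w = C ((C ^ k) w) := by rw [pow_succ']; rfl
        have h2 : ∀ z, (B ^ (k + 1)) z = (B ^ k) (B z) := by intro z; rw [pow_succ]; rfl
        rw [h1, h2, hBC, ih]
  have pairingInv : ∀ (k : ℕ) (w u : Fin n → ℂ),
      dotProduct ((C ^ k) w) ((A ^ k) u) = dotProduct w u := by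
    intro k w u
    rw [pairing, hBCk]
  -- decay of C^k on generalized eigenvectors of B
  have decay : ∀ μ : ℂ, 1 < ‖μ‖ → ∀ (m : ℕ) (w : Fin n → ℂ),
      ((B - μ • (1 : Module.End ℂ (Fin n → ℂ))) ^ m) w = 0 →
      Tendsto (fun k => (C ^ k) w) atTop (𝓝 0) := by
    intro μ hμ m w hw
    have hμ0 : μ ≠ 0 := by
      intro h; rw [h, norm_zero] at hμ; linarith
    have hν0 : μ⁻¹ ≠ 0 := inv_ne_zero hμ0
    have hνμ : μ⁻¹ * μ = 1 := inv_mul_cancel₀ hμ0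
    have hνlt : ‖μ⁻¹‖ < 1 := by
      rw [norm_inv]
      have h1 : 0 < ‖μ‖ := lt_trans one_pos hμ
      rw [inv_lt_one_iff₀]
      right; exact hμ
    set N : Module.End ℂ (Fin n → ℂ) := C - μ⁻¹ • 1 with hN
    -- C * B = 1 and B * C = 1 as endomorphisms
    have hCBone : C * B = 1 := LinearMap.ext hCB
    have hBCone : B * C = 1 := LinearMap.ext hBC
    have hcommCB : Commute C B := by
      unfold Commute SemiconjBy
      rw [hCBone, hBCone]
    have hNfact : N = (-μ⁻¹) • (C * (B - μ • 1)) := by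
      have h1 : C * (B - μ • 1) = 1 - μ • C := by
        rw [mul_sub, hCBone, mul_smul_comm, mul_one]
      rw [h1, hN, smul_sub, smul_smul, neg_mul, hνμ, neg_smul, neg_smul, one_smul,
        sub_neg_eq_add, neg_add_eq_sub]
    have hcomm : Commute C (B - μ • 1) :=
      hcommCB.sub_right ((Commute.one_right C).smul_right μ)
    have hNm : (N ^ m) w = 0 := by
      rw [hNfact, smul_pow, hcomm.mul_pow, LinearMap.smul_apply, Module.End.mul_apply, hw,
        map_zero, smul_zero]
    have hCN : C = N + μ⁻¹ • 1 := by rw [hN]; abel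
    have hcomm2 : Commute N (μ⁻¹ • (1 : Module.End ℂ (Fin n → ℂ))) :=
      (Commute.one_right N).smul_right μ⁻¹
    have expand : ∀ k : ℕ, m ≤ k → (C ^ k) w
        = ∑ j ∈ Finset.range m, ((k.choose j : ℂ) * μ⁻¹ ^ (k - j)) • ((N ^ j) w) := by
      intro k hk
      have h1 : (C : Module.End ℂ (Fin n → ℂ)) ^ k
          = ∑ j ∈ Finset.range (k + 1),
              N ^ j * (μ⁻¹ • 1) ^ (k - j) * (k.choose j : Module.End ℂ (Fin n → ℂ)) := by
        conv_lhs => rw [hCN]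
        exact hcomm2.add_pow k
      have h2 : ∀ j : ℕ,
          (N ^ j * (μ⁻¹ • 1) ^ (k - j) * (k.choose j : Module.End ℂ (Fin n → ℂ))) w
          = ((k.choose j : ℂ) * μ⁻¹ ^ (k - j)) • ((N ^ j) w) := by
        intro j
        simp only [Module.End.mul_apply, Module.End.natCast_apply,
          ← Nat.cast_smul_eq_nsmul ℂ, smul_pow, one_pow, LinearMap.smul_apply,
          Module.End.one_apply, _root_.map_smul, smul_smul]
      rw [h1, LinearMap.sum_apply, Finset.sum_congr rfl (fun j _ => h2 j)]
      refine (Finset.sum_subset (Finset.range_subset_range.mpr (by omega)) ?_).symm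
      intro j hj1 hj2
      have hjm : m ≤ j := by
        simp only [Finset.mem_range, not_lt] at hj2
        exact hj2
      have hNj : (N ^ j) w = 0 := by
        have hsplit : N ^ j = N ^ (j - m) * N ^ m := by
          rw [← pow_add]
          congr 1
          omega
        rw [hsplit, Module.End.mul_apply, hNm, map_zero]
      rw [hNj, smul_zero]
    have hterm : ∀ j : ℕ,
        Tendsto (fun k : ℕ => ((k.choose j : ℂ) * μ⁻¹ ^ (k - j)) • ((N ^ j) w))
        atTop (𝓝 0) := by
      intro j
      have := (choose_mul_pow_tendsto_zero hν0 hνlt j).smul_const ((N ^ j) w)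
      simpa using this
    have hsum : Tendsto (fun k : ℕ =>
        ∑ j ∈ Finset.range m, ((k.choose j : ℂ) * μ⁻¹ ^ (k - j)) • ((N ^ j) w))
        atTop (𝓝 0) := by
      have := tendsto_finset_sum (Finset.range m) (fun j (_ : j ∈ Finset.range m) => hterm j)
      simpa using this
    apply hsum.congr'
    filter_upwards [eventually_ge_atTop m] with k hk
    exact (expand k hk).symm
  -- Step B: generalized eigenvectors of B annihilate x
  have stepB : ∀ (μ : ℂ) (w : Fin n → ℂ), w ∈ B.maxGenEigenspace μ →
      dotProduct w x = 0 := by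
    intro μ w hwmem
    rcases eq_or_ne w 0 with rfl | hw0
    · simp
    obtain ⟨m, hm⟩ := (Module.End.mem_maxGenEigenspace B μ w).mp hwmem
    have hμeig : B.HasEigenvalue μ := by
      apply Module.End.hasEigenvalue_of_hasGenEigenvalue (k := m)
      refine Submodule.ne_bot_iff _ |>.mpr ⟨w, ?_, hw0⟩
      rw [Module.End.mem_genEigenspace_nat]
      exact hm
    have h1 : 1 < ‖μ‖ := stepA μ hμeig
    have hdec := decay μ h1 m w hm
    obtain ⟨k, hk, u, hu, hAu⟩ := hJ' 0
    have e1 : Tendsto (fun i => dotProduct w (u i)) atTop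
        (𝓝 (dotProduct w x)) :=
      tendsto_dotProduct_aux tendsto_const_nhds hu
    have e2 : Tendsto (fun i => dotProduct w (u i)) atTop (𝓝 0) := by
      have h3 : Tendsto (fun i => (C ^ k i) w) atTop (𝓝 0) := hdec.comp hk.tendsto_atTop
      have h4 := tendsto_dotProduct_aux h3 hAu
      rw [zero_dotProduct] at h4
      exact h4.congr fun i => pairingInv (k i) w (u i)
    exact tendsto_nhds_unique e1 e2
  -- conclude x = 0
  have hall : ∀ w : Fin n → ℂ, dotProduct w x = 0 := by
    have hspan := Module.End.iSup_maxGenEigenspace_eq_top B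
    set φ : (Fin n → ℂ) →ₗ[ℂ] ℂ :=
      { toFun := fun w => dotProduct w x
        map_add' := fun a b => add_dotProduct a b x
        map_smul' := fun c a => by simp [smul_dotProduct] } with hφ
    have hle : (⨆ μ : ℂ, B.maxGenEigenspace μ) ≤ LinearMap.ker φ := by
      apply iSup_le
      intro μ w hw
      exact LinearMap.mem_ker.mpr (stepB μ w hw)
    intro w
    have hwk : w ∈ LinearMap.ker φ := hle (hspan ▸ Submodule.mem_top)
    exact hwk
  apply hx
  funext i
  have := hall (Pi.single i 1)
  rwa [single_dotProduct, one_mul] at this
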